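/- Let X be a metric space and ⪯ a partial order on X whose graph {(x,y) : x ⪯ y} is closed in X × X and which is down-compact, meaning that for every compact K⁺ ⊆ X the set Down(K⁺) = {x ∈ X : ∃ x⁺ ∈ K⁺, x ⪯ x⁺} is compact. Then the following sandwich theorem holds: if sequences (x⁻ₙ), (xₙ), (x⁺ₙ) in X satisfy x⁻ₙ ⪯ xₙ ⪯ x⁺ₙ for all n, and both x⁻ₙ → x∞ and x⁺ₙ → x∞, then xₙ → x∞. -/
import Mathlib


open Filter

/-- Sandwich theorem for a closed, down-compact partial order on a metric space. -/
theorem stmt_3 {X : Type*} [MetricSpace X] (r : X → X → Prop)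
    (hrefl : ∀ x, r x x)
    (hanti : ∀ x y, r x y → r y x → x = y)
    (htrans : ∀ x y z, r x y → r y z → r x z)
    (hclosed : IsClosed {p : X × X | r p.1 p.2})
    (hdc : ∀ K : Set X, IsCompact K → IsCompact {x | ∃ y ∈ K, r x y})
    (a b c : ℕ → X) (x : X)
    (hab : ∀ n, r (a n) (b n)) (hbc : ∀ n, r (b n) (c n))
    (ha : Tendsto a atTop (nhds x)) (hc : Tendsto c atTop (nhds x)) :
    Tendsto b atTop (nhds x) := by
  -- K = range c ∪ {x} is compact
  have hK : IsCompact (Set.range c ∪ {x}) := by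
    simpa [Set.union_comm] using hc.isCompact_insert_range
  have hD : IsCompact {z | ∃ y ∈ Set.range c ∪ {x}, r z y} := hdc _ hK
  have hbD : ∀ n, b n ∈ {z | ∃ y ∈ Set.range c ∪ {x}, r z y} := fun n =>
    ⟨c n, Or.inl ⟨n, rfl⟩, hbc n⟩
  refine tendsto_of_subseq_tendsto fun ns hns => ?_
  obtain ⟨y, -, φ, hφ, hlim⟩ := hD.tendsto_subseq (fun n => hbD (ns n))
  -- limit along b ∘ ns ∘ φ is y; show y = x
  have hans : Tendsto (fun n => a (ns (φ n))) atTop (nhds x) :=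
    ha.comp (hns.comp hφ.tendsto_atTop)
  have hcns : Tendsto (fun n => c (ns (φ n))) atTop (nhds x) :=
    hc.comp (hns.comp hφ.tendsto_atTop)
  have hxy : r x y := by
    have : Tendsto (fun n => (a (ns (φ n)), b (ns (φ n)))) atTop (nhds (x, y)) :=
      hans.prodMk_nhds hlim
    exact hclosed.mem_of_tendsto this (Eventually.of_forall fun n => hab _)
  have hyx : r y x := by
    have : Tendsto (fun n => (b (ns (φ n)), c (ns (φ n)))) atTop (nhds (y, x)) :=
      hlim.prodMk_nhds hcns
    exact hclosed.mem_of_tendsto this (Eventually.of_forall fun n => hbc _)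
  exact ⟨φ, (hanti x y hxy hyx) ▸ hlim⟩
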